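/- Let R be the Hilbert field (the least Pythagorean subfield of ℝ) and let F be any Pythagorean, formally real field. Then there exists a ring homomorphism ν: R → F. -/

import Mathlib

open Polynomial IntermediateField

/-- A subfield `K` of `ℝ` is Pythagorean if for any `a, b ∈ K` there is `c ∈ K`
with `a² + b² = c²`. -/
def PythSubfield (K : Subfield ℝ) : Prop :=
  ∀ a b : ℝ, a ∈ K → b ∈ K → ∃ c ∈ K, a ^ 2 + b ^ 2 = c ^ 2

/-- The Hilbert field: the least (intersection of all) Pythagorean subfield(s) of `ℝ`. -/
noncomputable def HilbertField : Subfield ℝ :=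
  sInf {K : Subfield ℝ | PythSubfield K}

/-- The Hilbert field admits a ring homomorphism into any Pythagorean formally real
field. -/
theorem stmt18 {F : Type*} [Field F]
    (hPyth : ∀ a b : F, ∃ c : F, a ^ 2 + b ^ 2 = c ^ 2)
    (hFR : ∀ (k : ℕ) (a : Fin k → F), (∑ i, a i ^ 2) = 0 → ∀ i, a i = 0) :
    Nonempty (HilbertField →+* F) := by
  have hchar : CharP F 0 := by
    constructor
    intro n
    constructor
    · intro hn
      by_contra h
      have hn0 : n ≠ 0 := by omega
      have : (∑ i : Fin n, (1 : F) ^ 2) = 0 := by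
        simp [Finset.sum_const, hn]
      have := hFR n (fun _ => 1) this ⟨0, Nat.pos_of_ne_zero hn0⟩
      exact one_ne_zero this
    · rintro ⟨k, rfl⟩; simp
  haveI : CharZero F := CharP.charP_to_charZero F
  obtain ⟨x, -, hx⟩ := zorn_le_nonempty_Ici₀ (⊥ : Lifts ℚ ℝ F)
    (fun c _ hc _ _ => Lifts.exists_upper_bound c hc) ⊥ le_rfl
  set L := x.carrier with hL
  have hP : ∀ a b : ℝ, a ∈ L → b ∈ L → ∃ c ∈ L, a ^ 2 + b ^ 2 = c ^ 2 := by
    intro a b ha hb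
    have hd : a ^ 2 + b ^ 2 ∈ L := add_mem (pow_mem ha 2) (pow_mem hb 2)
    have hdnn : (0:ℝ) ≤ a ^ 2 + b ^ 2 := by positivity
    set s := Real.sqrt (a ^ 2 + b ^ 2) with hs
    have hs2 : s ^ 2 = a ^ 2 + b ^ 2 := Real.sq_sqrt hdnn
    set dL : L := ⟨a ^ 2 + b ^ 2, hd⟩ with hdL
    set p : Polynomial L := X ^ 2 - C dL with hp
    have hpm : p.Monic := monic_X_pow_sub_C dL (by norm_num)
    have hroot : Polynomial.aeval s p = 0 := by
      rw [hp]
      simp only [map_sub, map_pow, aeval_X, aeval_C]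
      rw [show (algebraMap L ℝ) dL = a ^ 2 + b ^ 2 from rfl, hs2]
      ring
    have hint : IsIntegral L s := ⟨p, hpm, hroot⟩
    obtain ⟨c, hc⟩ := hPyth (x.emb ⟨a, ha⟩) (x.emb ⟨b, hb⟩)
    have hembd : x.emb dL = c ^ 2 := by
      have hdd : dL = ⟨a, ha⟩ ^ 2 + ⟨b, hb⟩ ^ 2 := rfl
      rw [hdd, map_add, map_pow, map_pow, hc]
    have hpsplit : (p.map x.emb.toRingHom).Splits := by
      have hmap : p.map x.emb.toRingHom = (X - C c) * (X + C c) := by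
        rw [hp]
        simp only [Polynomial.map_sub, Polynomial.map_pow, map_X, map_C]
        rw [show x.emb.toRingHom dL = c ^ 2 from hembd, map_pow]
        ring
      rw [hmap]
      exact (Splits.X_sub_C _).mul
        (by rw [← sub_neg_eq_add, ← map_neg]; exact Splits.X_sub_C _)
    have hsplit : ((minpoly L s).map x.emb.toRingHom).Splits :=
      Splits.of_dvd hpsplit (hpm.map _).ne_zero (Polynomial.map_dvd _ (minpoly.dvd L s hroot))
    obtain ⟨y, hxy, hsy⟩ := x.exists_lift_of_splits' hint hsplit
    have hyx : y ≤ x := hx hxy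
    exact ⟨s, hyx.1 hsy, hs2.symm⟩
  have hle : HilbertField ≤ L.toSubfield := sInf_le hP
  refine ⟨{ toFun := fun r => x.emb ⟨r.1, hle r.2⟩
            map_one' := ?_, map_mul' := ?_, map_zero' := ?_, map_add' := ?_ }⟩
  · show x.emb ⟨((1 : HilbertField) : ℝ), hle (1 : HilbertField).2⟩ = 1
    rw [show (⟨((1 : HilbertField) : ℝ), hle (1 : HilbertField).2⟩ : L) = 1
        from Subtype.ext rfl, map_one]
  · intro r t
    show x.emb ⟨((r * t : HilbertField) : ℝ), hle (r * t).2⟩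
        = x.emb ⟨r.1, hle r.2⟩ * x.emb ⟨t.1, hle t.2⟩
    rw [show (⟨((r * t : HilbertField) : ℝ), hle (r * t).2⟩ : L)
        = ⟨r.1, hle r.2⟩ * ⟨t.1, hle t.2⟩ from Subtype.ext rfl, map_mul]
  · show x.emb ⟨((0 : HilbertField) : ℝ), hle (0 : HilbertField).2⟩ = 0
    rw [show (⟨((0 : HilbertField) : ℝ), hle (0 : HilbertField).2⟩ : L) = 0
        from Subtype.ext rfl, map_zero]
  · intro r t
    show x.emb ⟨((r + t : HilbertField) : ℝ), hle (r + t).2⟩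
        = x.emb ⟨r.1, hle r.2⟩ + x.emb ⟨t.1, hle t.2⟩
    rw [show (⟨((r + t : HilbertField) : ℝ), hle (r + t).2⟩ : L)
        = ⟨r.1, hle r.2⟩ + ⟨t.1, hle t.2⟩ from Subtype.ext rfl, map_add]
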